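/- For a prime p ≥ 7, let A_{01} = {a ∈ Z/pZ : a is a nonzero quadratic residue and a+1 is a nonzero quadratic non-residue mod p}. Then ∑_{a ∈ A_{01}} (a^2 + a) ≡ −1/32 (mod p). -/

import Mathlib

open Finset

open scoped Classical in
theorem sum_A01 (p : ℕ) [Fact p.Prime] (hp7 : 7 ≤ p) :
    (∑ a ∈ Finset.univ.filter
        (fun a : ZMod p => (a ≠ 0 ∧ IsSquare a) ∧ (a + 1 ≠ 0 ∧ ¬ IsSquare (a + 1))),
        (a ^ 2 + a)) = -(32 : ZMod p)⁻¹ := by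
  have hp : p.Prime := Fact.out
  have hodd : p % 2 = 1 := hp.eq_two_or_odd.resolve_left (by omega)
  obtain ⟨h, hph, hh⟩ : ∃ h, p = 2 * h + 1 ∧ p / 2 = h := ⟨p / 2, by omega, rfl⟩
  -- numerals are nonzero
  have hnz : ∀ n : ℕ, 0 < n → n < p → ((n : ZMod p)) ≠ 0 := by
    intro n hn hnp
    rw [Ne, ZMod.natCast_eq_zero_iff]
    intro hd; exact absurd (Nat.le_of_dvd hn hd) (by omega)
  have h2 : (2 : ZMod p) ≠ 0 := by have := hnz 2 (by norm_num) (by omega); simpa using this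
  have h4 : (4 : ZMod p) ≠ 0 := by have := hnz 4 (by norm_num) (by omega); simpa using this
  have h32 : (32 : ZMod p) ≠ 0 := by
    have : (32 : ZMod p) = 2^5 := by norm_num
    rw [this]; exact pow_ne_zero _ h2
  have hne : (1 : ZMod p) ≠ -1 := by
    haveI : Fact (2 < p) := ⟨by omega⟩
    exact fun hc => ZMod.neg_one_ne_one hc.symm
  -- vanishing power sums
  have msum : ∀ i : ℕ, 0 < i → i < 2 * h → (∑ x : ZMod p, x ^ i) = 0 := by
    intro i _ hi
    exact FiniteField.sum_pow_lt_card_sub_one (K := ZMod p) i (by rw [ZMod.card]; omega)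
  have allsum : ∀ i : ℕ, 0 < i → i ≤ 2 * h + 2 → i ≠ 2 * h → (∑ x : ZMod p, x ^ i) = 0 := by
    intro i hi0 hi2 hi
    rcases lt_or_ge i (2 * h) with hlt | hge
    · exact msum i hi0 hlt
    · rcases (by omega : i = 2 * h + 1 ∨ i = 2 * h + 2) with rfl | rfl
      · calc (∑ x : ZMod p, x ^ (2 * h + 1)) = ∑ x : ZMod p, x ^ 1 := by
              refine Finset.sum_congr rfl fun x _ => ?_
              rw [pow_one, show 2 * h + 1 = p from hph.symm, ZMod.pow_card]
          _ = 0 := msum 1 one_pos (by omega)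
      · calc (∑ x : ZMod p, x ^ (2 * h + 2)) = ∑ x : ZMod p, x ^ 2 := by
              refine Finset.sum_congr rfl fun x _ => ?_
              rw [show 2 * h + 2 = p + 1 by omega, pow_succ, sq, ZMod.pow_card]
          _ = 0 := msum 2 two_pos (by omega)
  -- the top power sum
  have tsum : (∑ x : ZMod p, x ^ (2 * h)) = -1 := by
    have key : ∀ x : ZMod p, x ^ (2 * h) = 1 - (if x = 0 then 1 else 0) := by
      intro x
      by_cases hx : x = 0
      · rw [hx, if_pos rfl, sub_self, zero_pow (by omega)]
      · rw [if_neg hx, sub_zero]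
        have := ZMod.pow_card_sub_one_eq_one hx
        rwa [show p - 1 = 2 * h by omega] at this
    rw [Finset.sum_congr rfl fun x _ => key x, Finset.sum_sub_distrib,
      Finset.sum_ite_eq' Finset.univ (0 : ZMod p) (fun _ => (1 : ZMod p))]
    simp [ZMod.card, ZMod.natCast_self]
  -- pointwise identity with the character indicator
  have point : ∀ a : ZMod p,
      (if (a ≠ 0 ∧ IsSquare a) ∧ (a + 1 ≠ 0 ∧ ¬ IsSquare (a + 1)) then a ^ 2 + a else 0)
      = 4⁻¹ * ((a ^ 2 + a) * (1 + a ^ h) * (1 - (a + 1) ^ h)) := by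
    intro a
    by_cases ha : a = 0
    · simp [ha]
    by_cases hb : a + 1 = 0
    · have hx : a = -1 := eq_neg_of_add_eq_zero_left hb
      have haa : a ^ 2 + a = 0 := by rw [hx]; ring
      simp [hb, haa]
    · have hEa := ZMod.euler_criterion p ha
      have hEb := ZMod.euler_criterion p hb
      rw [hh] at hEa hEb
      have h1 := ZMod.pow_div_two_eq_neg_one_or_one p ha
      have hb1 := ZMod.pow_div_two_eq_neg_one_or_one p hb
      rw [hh] at h1 hb1
      rcases h1 with h1 | h1
      · rcases hb1 with hb1 | hb1
        · rw [if_neg (by rintro ⟨_, _, hns⟩; exact hns (hEb.mpr hb1)), hb1]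
          ring
        · rw [if_pos ⟨⟨ha, hEa.mpr h1⟩, hb,
            fun hs => hne ((hEb.mp hs).symm.trans hb1)⟩, h1, hb1]
          field_simp
          ring
      · rw [if_neg (by rintro ⟨⟨_, hsq⟩, _⟩; exact hne ((hEa.mp hsq).symm.trans h1)), h1]
        ring
  -- reindexed power sums
  have powsum : ∀ i : ℕ, 0 < i → i ≤ 2 * h + 2 → i ≠ 2 * h →
      (∑ x : ZMod p, (x + 1) ^ i) = 0 := by
    intro i hi0 hi2 hi
    have := Equiv.sum_comp (Equiv.addRight (1 : ZMod p)) (fun b => b ^ i)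
    simp only [Equiv.coe_addRight] at this
    rw [this]
    exact allsum i hi0 hi2 hi
  -- the binomial sum
  have S7 : (∑ a : ZMod p, a ^ h * a * ((a + 1) ^ h * (a + 1)))
      = -((h + 1).choose (h - 1) : ZMod p) := by
    have key : ∀ a : ZMod p, a ^ h * a * ((a + 1) ^ h * (a + 1))
        = ∑ j ∈ Finset.range (h + 2), a ^ (h + 1 + j) * ((h + 1).choose j : ZMod p) := by
      intro a
      have : (a + 1) ^ (h + 1) = ∑ j ∈ Finset.range (h + 2), a ^ j * ((h + 1).choose j : ZMod p) := by
        rw [add_pow]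
        exact Finset.sum_congr rfl fun j _ => by rw [one_pow, mul_one]
      calc a ^ h * a * ((a + 1) ^ h * (a + 1)) = a ^ (h + 1) * (a + 1) ^ (h + 1) := by
            rw [pow_succ, pow_succ]
        _ = ∑ j ∈ Finset.range (h + 2), a ^ (h + 1 + j) * ((h + 1).choose j : ZMod p) := by
            rw [this, Finset.mul_sum]
            exact Finset.sum_congr rfl fun j _ => by rw [pow_add]; ring
    rw [Finset.sum_congr rfl fun a _ => key a, Finset.sum_comm]
    simp only [← Finset.sum_mul]
    rw [Finset.sum_eq_single (h - 1)]
    · rw [show h + 1 + (h - 1) = 2 * h by omega, tsum]; ring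
    · intro j hj hjne
      rw [allsum (h + 1 + j) (by omega) (by simp at hj; omega) (by omega), zero_mul]
    · intro hmem; exact absurd (Finset.mem_range.mpr (by omega)) hmem
  -- assemble
  rw [Finset.sum_filter, Finset.sum_congr rfl fun a _ => point a, ← Finset.mul_sum]
  have expand : ∀ a : ZMod p, (a ^ 2 + a) * (1 + a ^ h) * (1 - (a + 1) ^ h)
      = (a ^ 2 + (a + (a ^ h * a ^ 2 + a ^ h * a)))
        - ((a + 1) ^ h * (a + 1) ^ 2 - (a + 1) ^ h * (a + 1))
        - a ^ h * a * ((a + 1) ^ h * (a + 1)) := fun a => by ring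
  rw [Finset.sum_congr rfl fun a _ => expand a]
  simp only [Finset.sum_sub_distrib, Finset.sum_add_distrib]
  have e1 : (∑ a : ZMod p, a ^ 2) = 0 := allsum 2 (by omega) (by omega) (by omega)
  have e2 : (∑ a : ZMod p, a) = 0 := by
    have := allsum 1 (by omega) (by omega) (by omega)
    simpa using this
  have e3 : (∑ a : ZMod p, a ^ h * a ^ 2) = 0 := by
    rw [Finset.sum_congr rfl fun a _ => (pow_add a h 2).symm]
    exact allsum (h + 2) (by omega) (by omega) (by omega)
  have e4 : (∑ a : ZMod p, a ^ h * a) = 0 := by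
    rw [Finset.sum_congr rfl fun a _ => (pow_succ a h).symm]
    exact allsum (h + 1) (by omega) (by omega) (by omega)
  have e5 : (∑ a : ZMod p, (a + 1) ^ h * (a + 1) ^ 2) = 0 := by
    rw [Finset.sum_congr rfl fun a _ => (pow_add (a + 1) h 2).symm]
    exact powsum (h + 2) (by omega) (by omega) (by omega)
  have e6 : (∑ a : ZMod p, (a + 1) ^ h * (a + 1)) = 0 := by
    rw [Finset.sum_congr rfl fun a _ => (pow_succ (a + 1) h).symm]
    exact powsum (h + 1) (by omega) (by omega) (by omega)
  rw [e1, e2, e3, e4, e5, e6, S7]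
  -- final arithmetic
  have hH : (2 : ZMod p) * (h : ℕ) = -1 := by
    have hc : ((2 * h + 1 : ℕ) : ZMod p) = 0 := by rw [← hph]; exact ZMod.natCast_self p
    push_cast at hc; linear_combination hc
  have hcn : 2 * Nat.choose (h + 1) (h - 1) = (h + 1) * h := by
    rw [show h - 1 = (h + 1) - 2 by omega, Nat.choose_symm (by omega), Nat.choose_two_right,
      show h + 1 - 1 = h from rfl]
    refine Nat.mul_div_cancel' ?_
    have := (Nat.even_mul_succ_self h).two_dvd
    rwa [mul_comm] at this
  have hc2 : (2 : ZMod p) * ((h + 1).choose (h - 1) : ℕ) = (((h : ℕ) : ZMod p) + 1) * (h : ℕ) := by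
    have := congrArg (Nat.cast : ℕ → ZMod p) hcn
    push_cast at this
    linear_combination this
  field_simp
  linear_combination (16 : ZMod p) * hc2 + ((8 : ZMod p) * ((h : ℕ) : ZMod p) + 4) * hH
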